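/- Let $\phi$ be invertible in $L^\infty(\mathbb{T})$ and define $\psi(t) = \phi^{-1}(-t^{-1})$. Then $\Phi(\phi) = P L(\phi) P_J : L^2_J(\mathbb{T}) \to H^2(\mathbb{T})$ is invertible if and only if $\Psi(\psi) = P_J L(\psi) P : H^2(\mathbb{T}) \to L^2_J(\mathbb{T})$ is invertible. -/

import Mathlib

open MeasureTheory Complex Real
noncomputable section
namespace TH

abbrev Tp : ℝ := 2 * Real.pi
instance : Fact (0 < Tp) := ⟨by positivity⟩
abbrev 𝕋 := AddCircle Tp
abbrev μ : Measure 𝕋 := AddCircle.haarAddCircle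
abbrev L2 := Lp ℂ 2 μ

open scoped Classical in
/-- Multiplication operator by `φ` (defined to be `0` if `φ` is not essentially bounded). -/
def Lmul (φ : 𝕋 → ℂ) : L2 →L[ℂ] L2 :=
  if hφ : MemLp φ ⊤ μ then
    LinearMap.mkContinuous
      { toFun := fun f => ((Lp.memLp f).smul (r := 2) hφ).toLp (φ • ⇑f)
        map_add' := fun f g => by
          rw [← MemLp.toLp_add]
          exact MemLp.toLp_congr _ _ (by
            filter_upwards [Lp.coeFn_add f g] with x hx
            simp only [Pi.smul_apply, smul_eq_mul, Pi.mul_apply, hx, Pi.add_apply, mul_add])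
        map_smul' := fun c f => by
          rw [RingHom.id_apply, ← MemLp.toLp_const_smul]
          exact MemLp.toLp_congr ((Lp.memLp (c • f)).smul (r := 2) hφ)
            (((Lp.memLp f).smul (r := 2) hφ).const_smul c) (by
            filter_upwards [Lp.coeFn_smul c f] with x hx
            simp only [Pi.smul_apply, smul_eq_mul, Pi.mul_apply, hx]
            ring) }
      (eLpNorm φ ⊤ μ).toReal
      (fun f => by
        simp only [LinearMap.coe_mk, AddHom.coe_mk]
        rw [Lp.norm_toLp, Lp.norm_def, ← ENNReal.toReal_mul]
        refine ENNReal.toReal_mono ?_ ?_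
        · exact ENNReal.mul_ne_top hφ.eLpNorm_ne_top (Lp.eLpNorm_ne_top f)
        · exact eLpNorm_smul_le_eLpNorm_top_mul_eLpNorm 2 (Lp.aestronglyMeasurable f) φ)
  else 0

/-- Composition with `x ↦ -x` on `L²`. -/
def Cneg : L2 → L2 :=
  Lp.compMeasurePreserving (fun x : 𝕋 => -x) (Measure.measurePreserving_neg μ)

/-- The flip operator `J : f(t) ↦ t⁻¹ f(t⁻¹)`. -/
def Jop : L2 →L[ℂ] L2 :=
  { toFun := fun f => Lmul (fun x => fourier (-1) x) (Cneg f)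
    map_add' := fun f g => by
      show Lmul _ (Cneg (f + g)) = Lmul _ (Cneg f) + Lmul _ (Cneg g)
      unfold Cneg
      rw [map_add, map_add]
    map_smul' := fun c f => by
      show Lmul _ (Cneg (c • f)) = c • Lmul _ (Cneg f)
      rw [← map_smul (Lmul fun x => fourier (-1) x)]
      congr 1
      apply Lp.ext
      unfold Cneg
      filter_upwards [Lp.coeFn_compMeasurePreserving (c • f) (Measure.measurePreserving_neg μ),
        Lp.coeFn_smul c (Lp.compMeasurePreserving (fun x : 𝕋 => -x)
          (Measure.measurePreserving_neg μ) f),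
        (Measure.measurePreserving_neg μ).quasiMeasurePreserving.ae_eq_comp (Lp.coeFn_smul c f),
        Lp.coeFn_compMeasurePreserving f (Measure.measurePreserving_neg μ)]
        with x hx1 hx2 hx3 hx4
      refine hx1.trans (hx3.trans ?_)
      have h5 : ((c • (↑↑f : 𝕋 → ℂ)) ∘ Neg.neg) x = c • (↑↑f ∘ Neg.neg) x := rfl
      rw [h5, ← hx4]
      exact hx2.symm
    cont := by
      exact (Lmul _).continuous.comp
        (Lp.isometry_compMeasurePreserving (E := ℂ) (p := 2)
          (Measure.measurePreserving_neg μ)).continuous }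

/-- The Hardy space `H²(𝕋)`: closed span of `{t^n : n ≥ 0}`. -/
def Hardy : Submodule ℂ L2 :=
  (Submodule.span ℂ (Set.range fun n : ℕ => (fourierLp 2 (n : ℤ) : L2))).topologicalClosure

instance : CompleteSpace Hardy :=
  IsClosed.completeSpace_coe (hs := Submodule.isClosed_topologicalClosure _)

/-- The Riesz projection, as an operator on `L²(𝕋)`. -/
def Pproj : L2 →L[ℂ] L2 := Hardy.subtypeL ∘L Hardy.orthogonalProjectionOnto

/-- The Toeplitz operator `T(φ) : f ↦ P(φ f)` on `H²`. -/
def Top (φ : 𝕋 → ℂ) : Hardy →L[ℂ] Hardy :=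
  Hardy.orthogonalProjectionOnto ∘L Lmul φ ∘L Hardy.subtypeL

/-- The Hankel operator `H(φ) : f ↦ P(φ · Jf)` on `H²`. -/
def Hop (φ : 𝕋 → ℂ) : Hardy →L[ℂ] Hardy :=
  Hardy.orthogonalProjectionOnto ∘L Lmul φ ∘L Jop ∘L Hardy.subtypeL

/-- The Toeplitz + Hankel operator `M(φ) = T(φ) + H(φ)`. -/
def Mop (φ : 𝕋 → ℂ) : Hardy →L[ℂ] Hardy := Top φ + Hop φ

/-- The flip `φ̃(t) = φ(t⁻¹)` of a function on the circle. -/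
def flip (φ : 𝕋 → ℂ) : 𝕋 → ℂ := fun x => φ (-x)


/-- The projection `P_J = (I+J)/2` on `L²(𝕋)`. -/
def PJ : L2 →L[ℂ] L2 := (2 : ℂ)⁻¹ • (1 + Jop)

/-- `L²_J(𝕋) = im P_J`. -/
def L2J : Submodule ℂ L2 := LinearMap.range (PJ : L2 →ₗ[ℂ] L2)

/-- `A = (I+J)P : H² → L²_J`. -/
def Aop : Hardy →L[ℂ] L2J :=
  ((1 + Jop) ∘L Hardy.subtypeL).codRestrict L2J (fun v =>
    LinearMap.mem_range.mpr ⟨(2 : ℂ) • (Hardy.subtypeL v), by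
      show (2 : ℂ)⁻¹ • ((1 + Jop) ((2 : ℂ) • (Hardy.subtypeL v))) = (1 + Jop) (Hardy.subtypeL v)
      rw [_root_.map_smul, smul_smul]
      norm_num⟩)

/-- `B = ½ P (I+J) : L²_J → H²`. -/
def Bop : L2J →L[ℂ] Hardy :=
  (2 : ℂ)⁻¹ • (Hardy.orthogonalProjectionOnto ∘L (1 + Jop) ∘L L2J.subtypeL)

/-- `Φ(φ) = P L(φ) P_J : L²_J → H²`. -/
def Phi (φ : 𝕋 → ℂ) : L2J →L[ℂ] Hardy :=
  Hardy.orthogonalProjectionOnto ∘L Lmul φ ∘L PJ ∘L L2J.subtypeL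

/-- `Ψ(ψ) = P_J L(ψ) P : H² → L²_J`. -/
def Psi (ψ : 𝕋 → ℂ) : Hardy →L[ℂ] L2J :=
  (PJ ∘L Lmul ψ ∘L Hardy.subtypeL).codRestrict L2J
    (fun v => LinearMap.mem_range.mpr ⟨(Lmul ψ ∘L Hardy.subtypeL) v, rfl⟩)

section Lemmas

open Filter

lemma lmul_ae {φ : 𝕋 → ℂ} (hφ : MemLp φ ⊤ μ) (f : L2) :
    ⇑(Lmul φ f) =ᵐ[μ] fun x => φ x * f x := by
  unfold Lmul
  rw [dif_pos hφ]
  show ⇑(((Lp.memLp f).smul (r := 2) hφ).toLp (φ • ⇑f)) =ᵐ[μ] _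
  exact (MemLp.coeFn_toLp _).trans (Eventually.of_forall fun x => rfl)

lemma memℒp_fourier (n : ℤ) : MemLp (fun x : 𝕋 => (fourier n x : ℂ)) ⊤ μ := by
  have h1 : ∀ x : 𝕋, ‖(fourier n x : ℂ)‖ ≤ 1 := by
    intro x
    rw [fourier_apply]
    exact (Circle.norm_coe _).le
  exact memLp_top_of_bound ((fourier n).continuous.aestronglyMeasurable) 1
    (Eventually.of_forall h1)

lemma cneg_ae (f : L2) : ⇑(Cneg f) =ᵐ[μ] fun x => f (-x) :=
  Lp.coeFn_compMeasurePreserving f (Measure.measurePreserving_neg μ)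

lemma comp_neg_ae {g h : 𝕋 → ℂ} (H : g =ᵐ[μ] h) :
    (fun x : 𝕋 => g (-x)) =ᵐ[μ] fun x => h (-x) :=
  (Measure.measurePreserving_neg μ).quasiMeasurePreserving.ae_eq_comp H

lemma jop_ae (f : L2) : ⇑(Jop f) =ᵐ[μ] fun x => fourier (-1) x * f (-x) := by
  have h1 : ⇑(Jop f) =ᵐ[μ] fun x => fourier (-1) x * (Cneg f) x :=
    lmul_ae (memℒp_fourier (-1)) (Cneg f)
  refine h1.trans ?_
  filter_upwards [cneg_ae f] with x hx
  rw [hx]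

end Lemmas
section Lemmas2
open Filter

/-- `W : f(t) ↦ f(-t)` (additively, translation by π). -/
def Wop : L2 →L[ℂ] L2 :=
  (Lp.compMeasurePreservingₗᵢ ℂ (fun x : 𝕋 => x + ((Real.pi : ℝ) : 𝕋))
    (measurePreserving_add_right μ _)).toContinuousLinearMap

lemma wop_ae (f : L2) : ⇑(Wop f) =ᵐ[μ] fun x => f (x + ((Real.pi : ℝ) : 𝕋)) :=
  Lp.coeFn_compMeasurePreserving f (measurePreserving_add_right μ _)

lemma comp_addpi_ae {g h : 𝕋 → ℂ} (H : g =ᵐ[μ] h) :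
    (fun x : 𝕋 => g (x + ((Real.pi : ℝ) : 𝕋))) =ᵐ[μ] fun x => h (x + ((Real.pi : ℝ) : 𝕋)) :=
  (measurePreserving_add_right μ _).quasiMeasurePreserving.ae_eq_comp H

lemma pi_add_pi : ((Real.pi : ℝ) : 𝕋) + ((Real.pi : ℝ) : 𝕋) = 0 := by
  have h1 : ((Real.pi : ℝ) : 𝕋) + ((Real.pi : ℝ) : 𝕋) = ((Real.pi + Real.pi : ℝ) : 𝕋) := rfl
  have h2 : (Real.pi + Real.pi : ℝ) = Tp := by unfold Tp; ring
  rw [h1, h2]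
  exact AddCircle.coe_period Tp

lemma neg_pi_eq : -((Real.pi : ℝ) : 𝕋) = ((Real.pi : ℝ) : 𝕋) := by
  rw [neg_eq_iff_add_eq_zero, pi_add_pi]

lemma fourier_inv (x : 𝕋) : (fourier (-1) x : ℂ) * fourier (-1) (-x) = 1 := by
  have h1 : (fourier (-1) (-x) : ℂ) = fourier 1 x := by
    rw [fourier_apply, fourier_apply, neg_smul, smul_neg, neg_neg]
  rw [h1, ← fourier_add]
  norm_num

lemma fourier_flip (x : 𝕋) :
    (fourier (-1) (x + ((Real.pi : ℝ) : 𝕋)) : ℂ) = -fourier (-1) x := by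
  have h := fourier_add_half_inv_index (T := Tp) (n := -1) (by norm_num)
    (by unfold Tp; positivity) x
  have h2 : (Tp / 2 / (-1 : ℤ) : ℝ) = -Real.pi := by
    push_cast; unfold Tp; ring
  rw [h2] at h
  have h3 : ((-Real.pi : ℝ) : 𝕋) = ((Real.pi : ℝ) : 𝕋) := by
    rw [← neg_pi_eq]; norm_cast
  rwa [h3] at h

lemma jop_jop (f : L2) : Jop (Jop f) = f := by
  apply Lp.ext
  refine (jop_ae (Jop f)).trans ?_
  filter_upwards [comp_neg_ae (jop_ae f)] with x hx
  have hx' : (Jop f) (-x) = fourier (-1) (-x) * f (-(-x)) := hx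
  rw [hx', neg_neg, ← mul_assoc, fourier_inv, one_mul]

lemma wop_wop (f : L2) : Wop (Wop f) = f := by
  apply Lp.ext
  refine (wop_ae (Wop f)).trans ?_
  filter_upwards [comp_addpi_ae (wop_ae f)] with x hx
  have hx' : (Wop f) (x + _) = f (x + ((Real.pi : ℝ) : 𝕋) + ((Real.pi : ℝ) : 𝕋)) := hx
  rw [hx', add_assoc, pi_add_pi, add_zero]

lemma wop_jop (f : L2) : Wop (Jop f) = -(Jop (Wop f)) := by
  apply Lp.ext
  refine (wop_ae (Jop f)).trans ?_
  have h2 : ⇑(-(Jop (Wop f))) =ᵐ[μ] fun x => -(fourier (-1) x * (Wop f) (-x)) := by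
    filter_upwards [Lp.coeFn_neg (Jop (Wop f)), jop_ae (Wop f)] with x h1 h2
    rw [h1]
    show -(Jop (Wop f)) x = _
    rw [h2]
  refine EventuallyEq.trans ?_ h2.symm
  filter_upwards [comp_addpi_ae (jop_ae f), comp_neg_ae (wop_ae f)] with x h3 h4
  have h3' : (Jop f) (x + ((Real.pi : ℝ) : 𝕋))
      = fourier (-1) (x + ((Real.pi : ℝ) : 𝕋)) * f (-(x + ((Real.pi : ℝ) : 𝕋))) := h3
  have h4' : (Wop f) (-x) = f (-x + ((Real.pi : ℝ) : 𝕋)) := h4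
  rw [h3', h4', fourier_flip]
  have : -(x + ((Real.pi : ℝ) : 𝕋)) = -x + ((Real.pi : ℝ) : 𝕋) := by
    rw [neg_add, neg_pi_eq]
  rw [this, neg_mul]

lemma lmul_inv_cancel {φ : 𝕋 → ℂ} (hφ : MemLp φ ⊤ μ)
    (hφi : MemLp (fun x => (φ x)⁻¹) ⊤ μ) (hφ0 : ∀ᵐ x ∂μ, φ x ≠ 0) (f : L2) :
    Lmul φ (Lmul (fun x => (φ x)⁻¹) f) = f := by
  apply Lp.ext
  refine (lmul_ae hφ _).trans ?_
  filter_upwards [lmul_ae hφi f, hφ0] with x h1 h2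
  rw [h1, ← mul_assoc, mul_inv_cancel₀ h2, one_mul]

lemma lmul_inv_cancel' {φ : 𝕋 → ℂ} (hφ : MemLp φ ⊤ μ)
    (hφi : MemLp (fun x => (φ x)⁻¹) ⊤ μ) (hφ0 : ∀ᵐ x ∂μ, φ x ≠ 0) (f : L2) :
    Lmul (fun x => (φ x)⁻¹) (Lmul φ f) = f := by
  apply Lp.ext
  refine (lmul_ae hφi _).trans ?_
  filter_upwards [lmul_ae hφ f, hφ0] with x h1 h2
  rw [h1, ← mul_assoc, inv_mul_cancel₀ h2, one_mul]

end Lemmas2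
section Lemmas3
open Filter

lemma mp_flip : MeasurePreserving (fun x : 𝕋 => -x + ((Real.pi : ℝ) : 𝕋)) μ μ :=
  (measurePreserving_add_right μ _).comp (Measure.measurePreserving_neg μ)

lemma comp_flip_ae {g h : 𝕋 → ℂ} (H : g =ᵐ[μ] h) :
    (fun x : 𝕋 => g (-x + ((Real.pi : ℝ) : 𝕋))) =ᵐ[μ]
      fun x => h (-x + ((Real.pi : ℝ) : 𝕋)) :=
  mp_flip.quasiMeasurePreserving.ae_eq_comp H

lemma memℒp_flip {g : 𝕋 → ℂ} (hg : MemLp g ⊤ μ) :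
    MemLp (fun x => g (((Real.pi : ℝ) : 𝕋) - x)) ⊤ μ := by
  have h : (fun x : 𝕋 => g (((Real.pi : ℝ) : 𝕋) - x))
      = g ∘ (fun x : 𝕋 => -x + ((Real.pi : ℝ) : 𝕋)) := by
    funext x
    simp [sub_eq_neg_add]
  rw [h]
  exact hg.comp_measurePreserving mp_flip

lemma jw_lmul {g : 𝕋 → ℂ} (hg : MemLp g ⊤ μ) (f : L2) :
    Jop (Wop (Lmul g f)) =
      Lmul (fun x => g (((Real.pi : ℝ) : 𝕋) - x)) (Jop (Wop f)) := by
  apply Lp.ext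
  refine (jop_ae _).trans ?_
  have hR : ⇑(Lmul (fun x => g (((Real.pi : ℝ) : 𝕋) - x)) (Jop (Wop f))) =ᵐ[μ]
      fun x => g (((Real.pi : ℝ) : 𝕋) - x) *
        (fourier (-1) x * f (-x + ((Real.pi : ℝ) : 𝕋))) := by
    filter_upwards [lmul_ae (memℒp_flip hg) (Jop (Wop f)), jop_ae (Wop f),
      comp_neg_ae (wop_ae f)] with x a b c
    have c' : (Wop f) (-x) = f (-x + ((Real.pi : ℝ) : 𝕋)) := c
    rw [a, b, c']
  refine EventuallyEq.trans ?_ hR.symm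
  filter_upwards [comp_neg_ae (wop_ae (Lmul g f)), comp_flip_ae (lmul_ae hg f)]
    with x a b
  have a' : (Wop (Lmul g f)) (-x) = (Lmul g f) (-x + ((Real.pi : ℝ) : 𝕋)) := a
  have b' : (Lmul g f) (-x + ((Real.pi : ℝ) : 𝕋)) =
      g (-x + ((Real.pi : ℝ) : 𝕋)) * f (-x + ((Real.pi : ℝ) : 𝕋)) := b
  rw [a', b', sub_eq_neg_add]
  ring

lemma jop_bij : Function.Bijective (Jop : L2 →L[ℂ] L2) :=
  Function.bijective_iff_has_inverse.mpr ⟨Jop, jop_jop, jop_jop⟩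

lemma wop_bij : Function.Bijective (Wop : L2 →L[ℂ] L2) :=
  Function.bijective_iff_has_inverse.mpr ⟨Wop, wop_wop, wop_wop⟩

end Lemmas3
section Lemmas4
open Filter

lemma pj_fix {x : L2} (h : Jop x = x) : PJ x = x := by
  show (2:ℂ)⁻¹ • ((1 + Jop) x) = x
  rw [ContinuousLinearMap.add_apply, ContinuousLinearMap.one_apply, h, ← two_smul ℂ x, smul_smul]
  norm_num

lemma jop_pj (x : L2) : Jop (PJ x) = PJ x := by
  show Jop ((2:ℂ)⁻¹ • ((1 + Jop) x)) = (2:ℂ)⁻¹ • ((1 + Jop) x)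
  rw [_root_.map_smul]
  congr 1
  rw [ContinuousLinearMap.add_apply, ContinuousLinearMap.one_apply, map_add, jop_jop, add_comm]

lemma mem_L2J_iff {x : L2} : x ∈ L2J ↔ Jop x = x := by
  constructor
  · rintro ⟨y, rfl⟩
    exact jop_pj y
  · intro h
    exact ⟨x, pj_fix h⟩

lemma pj_eq_zero_iff {x : L2} : PJ x = 0 ↔ Jop x = -x := by
  show (2:ℂ)⁻¹ • ((1 + Jop) x) = 0 ↔ _
  rw [smul_eq_zero]
  simp only [inv_eq_zero, OfNat.ofNat_ne_zero, false_or]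
  rw [ContinuousLinearMap.add_apply, ContinuousLinearMap.one_apply, add_comm,
    add_eq_zero_iff_eq_neg]

lemma mem_ker_pj_iff {x : L2} : x ∈ LinearMap.ker (PJ : L2 →ₗ[ℂ] L2) ↔ Jop x = -x := by
  rw [LinearMap.mem_ker]; exact pj_eq_zero_iff

lemma phi_apply (φ : 𝕋 → ℂ) (v : L2J) :
    Phi φ v = Hardy.orthogonalProjectionOnto (Lmul φ ↑v) := by
  show Hardy.orthogonalProjectionOnto (Lmul φ (PJ ↑v)) = _
  rw [pj_fix (mem_L2J_iff.mp v.2)]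

lemma psi_coe (ψ : 𝕋 → ℂ) (v : Hardy) : (Psi ψ v : L2) = PJ (Lmul ψ ↑v) := rfl

lemma phi_bij_iff {φ : 𝕋 → ℂ} (hinj : Function.Injective (Lmul φ)) :
    Function.Bijective (Phi φ) ↔
      (Submodule.map (Lmul φ : L2 →ₗ[ℂ] L2) L2J ⊓ Hardyᗮ = ⊥ ∧
        Submodule.map (Lmul φ : L2 →ₗ[ℂ] L2) L2J ⊔ Hardyᗮ = ⊤) := by
  constructor
  · rintro ⟨hi, hs⟩
    constructor
    · rw [eq_bot_iff]
      rintro y ⟨⟨x, hx, rfl⟩, hy2⟩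
      have h0 : Phi φ ⟨x, hx⟩ = 0 := by
        rw [phi_apply]
        exact Submodule.orthogonalProjectionOnto_eq_zero_iff.mpr hy2
      have : (⟨x, hx⟩ : L2J) = 0 := hi (by rw [h0, map_zero])
      have hx0 : x = 0 := congrArg Subtype.val this
      simp [hx0]
    · rw [eq_top_iff]
      intro y _
      obtain ⟨v, hv⟩ := hs (Hardy.orthogonalProjectionOnto y)
      rw [phi_apply] at hv
      refine Submodule.mem_sup.mpr ⟨Lmul φ ↑v, ⟨↑v, v.2, rfl⟩, y - Lmul φ ↑v, ?_, by abel⟩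
      rw [← Submodule.orthogonalProjectionOnto_eq_zero_iff, map_sub, hv, sub_self]
  · rintro ⟨hi, hs⟩
    constructor
    · intro v w hvw
      rw [phi_apply, phi_apply] at hvw
      have h1 : Lmul φ (↑v - ↑w) ∈ Submodule.map (Lmul φ : L2 →ₗ[ℂ] L2) L2J ⊓ Hardyᗮ :=
        Submodule.mem_inf.mpr ⟨⟨↑v - ↑w, sub_mem v.2 w.2, rfl⟩,
          Submodule.orthogonalProjectionOnto_eq_zero_iff.mp (by rw [map_sub, map_sub, hvw, sub_self])⟩
      rw [hi] at h1
      have h2 : Lmul φ ↑v = Lmul φ ↑w := by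
        have := (Submodule.mem_bot ℂ).mp h1
        rw [map_sub] at this
        exact sub_eq_zero.mp this
      exact Subtype.ext (hinj h2)
    · intro g
      have hg : (g : L2) ∈ Submodule.map (Lmul φ : L2 →ₗ[ℂ] L2) L2J ⊔ Hardyᗮ := by rw [hs]; trivial
      obtain ⟨a, ⟨x, hx, rfl⟩, b, hb, hab⟩ := Submodule.mem_sup.mp hg
      refine ⟨⟨x, hx⟩, ?_⟩
      rw [phi_apply]
      apply Subtype.ext
      have : Lmul φ x = ↑g - b := by rw [← hab]; abel
      rw [this, map_sub, Submodule.orthogonalProjectionOnto_eq_zero_iff.mpr hb,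
        Submodule.orthogonalProjectionOnto_mem_subspace_eq_self]
      simp

end Lemmas4
section Lemmas5
open Filter

lemma psi_bij_iff {ψ : 𝕋 → ℂ} (hinj : Function.Injective (Lmul ψ)) :
    Function.Bijective (Psi ψ) ↔
      (Submodule.map (Lmul ψ : L2 →ₗ[ℂ] L2) Hardy ⊓ LinearMap.ker (PJ : L2 →ₗ[ℂ] L2) = ⊥ ∧
        Submodule.map (Lmul ψ : L2 →ₗ[ℂ] L2) Hardy ⊔ LinearMap.ker (PJ : L2 →ₗ[ℂ] L2) = ⊤) := by
  constructor
  · rintro ⟨hi, hs⟩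
    constructor
    · rw [eq_bot_iff]
      rintro y hy
      obtain ⟨⟨x, hx, rfl⟩, hy2⟩ := Submodule.mem_inf.mp hy
      have h0 : Psi ψ ⟨x, hx⟩ = 0 := Subtype.ext (by
        rw [psi_coe]
        exact LinearMap.mem_ker.mp hy2)
      have : (⟨x, hx⟩ : Hardy) = 0 := hi (by rw [h0, map_zero])
      have hx0 : x = 0 := congrArg Subtype.val this
      simp [hx0]
    · rw [eq_top_iff]
      intro y _
      obtain ⟨v, hv⟩ := hs ⟨PJ y, ⟨y, rfl⟩⟩
      have hv' : PJ (Lmul ψ ↑v) = PJ y := congrArg Subtype.val hv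
      refine Submodule.mem_sup.mpr ⟨Lmul ψ ↑v, ⟨↑v, v.2, rfl⟩, y - Lmul ψ ↑v,
        LinearMap.mem_ker.mpr (by simp only [ContinuousLinearMap.coe_coe]; rw [map_sub, hv', sub_self]), by abel⟩
  · rintro ⟨hi, hs⟩
    constructor
    · intro v w hvw
      have hvw' : PJ (Lmul ψ ↑v) = PJ (Lmul ψ ↑w) := congrArg Subtype.val hvw
      have h1 : Lmul ψ (↑v - ↑w) ∈ Submodule.map (Lmul ψ : L2 →ₗ[ℂ] L2) Hardy ⊓ LinearMap.ker (PJ : L2 →ₗ[ℂ] L2) :=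
        Submodule.mem_inf.mpr ⟨⟨↑v - ↑w, sub_mem v.2 w.2, rfl⟩,
          LinearMap.mem_ker.mpr (by simp only [ContinuousLinearMap.coe_coe]; rw [map_sub, map_sub, hvw', sub_self])⟩
      rw [hi] at h1
      have h2 : Lmul ψ ↑v = Lmul ψ ↑w := by
        have := (Submodule.mem_bot ℂ).mp h1
        rw [map_sub] at this
        exact sub_eq_zero.mp this
      exact Subtype.ext (hinj h2)
    · intro w
      have hg : (w : L2) ∈ Submodule.map (Lmul ψ : L2 →ₗ[ℂ] L2) Hardy ⊔ LinearMap.ker (PJ : L2 →ₗ[ℂ] L2) := by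
        rw [hs]; trivial
      obtain ⟨a, ⟨x, hx, rfl⟩, b, hb, hab⟩ := Submodule.mem_sup.mp hg
      refine ⟨⟨x, hx⟩, Subtype.ext ?_⟩
      rw [psi_coe]
      have : Lmul ψ x = ↑w - b := by rw [← hab]; abel
      rw [this, map_sub, show PJ b = 0 from LinearMap.mem_ker.mp hb, sub_zero,
        pj_fix (mem_L2J_iff.mp w.2)]

end Lemmas5
section Lemmas6
open Filter Submodule

/-- The closed span of the negative Fourier modes. -/
def Nneg : Submodule ℂ L2 :=
  (span ℂ (Set.range fun n : ℕ => (fourierLp 2 (-(n : ℤ) - 1) : L2))).topologicalClosure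

lemma ortho_closure (K : Submodule ℂ L2) : K.topologicalClosureᗮ = Kᗮ := by
  rw [← Submodule.orthogonal_orthogonal_eq_closure, Submodule.triorthogonal_eq_orthogonal]

set_option maxHeartbeats 1000000 in
lemma hardy_orth : Hardyᗮ = Nneg := by
  apply le_antisymm
  · intro x hx
    have hb := hasSum_fourier_series_L2 x
    have hzero : ∀ i : ℤ, 0 ≤ i → fourierCoeff (⇑x) i = 0 := by
      intro i hi
      rw [← fourierBasis_repr, HilbertBasis.repr_apply_apply]
      have hmem : (fourierBasis (T := Tp)) i ∈ Hardy := by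
        beta_reduce
        rw [congrFun (coe_fourierBasis (T := Tp)) i]
        apply Submodule.le_topologicalClosure
        apply Submodule.subset_span
        exact ⟨i.toNat, by simp [Int.toNat_of_nonneg hi]⟩
      exact (Submodule.mem_orthogonal Hardy x).mp hx _ hmem
    have : x ∈ closure ((span ℂ (Set.range fun n : ℕ => (fourierLp 2 (-(n : ℤ) - 1) : L2)) :
        Set L2)) := by
      refine mem_closure_of_tendsto hb (Eventually.of_forall ?_)
      intro s
      refine sum_mem fun i _ => ?_
      by_cases hi : 0 ≤ i
      · rw [hzero i hi, zero_smul]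
        exact zero_mem _
      · refine smul_mem _ _ (subset_span ?_)
        push_neg at hi
        refine ⟨(-i - 1).toNat, ?_⟩
        show fourierLp 2 (-(((-i - 1).toNat : ℕ) : ℤ) - 1) = fourierLp 2 i
        exact congrArg _ (by omega)
    rwa [← Submodule.topologicalClosure_coe] at this
  · unfold Nneg
    rw [show Hardyᗮ = (span ℂ (Set.range fun n : ℕ => (fourierLp 2 (n : ℤ) : L2)))ᗮ from
      ortho_closure _]
    refine Submodule.topologicalClosure_minimal _ ?_ (Submodule.isClosed_orthogonal _)
    rw [Submodule.span_le]
    rintro y ⟨n, rfl⟩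
    rw [SetLike.mem_coe, Submodule.mem_orthogonal]
    intro u hu
    induction hu using Submodule.span_induction with
    | mem z hz =>
      obtain ⟨m, rfl⟩ := hz
      refine orthonormal_fourier.2 ?_
      omega
    | zero => rw [inner_zero_left]
    | add a b _ _ ha hb => rw [inner_add_left, ha, hb, add_zero]
    | smul c a _ ha => rw [inner_smul_left, ha, mul_zero]

end Lemmas6
section Lemmas7
open Filter Submodule

lemma fourier_add_arg (n : ℤ) (x y : 𝕋) :
    (fourier n (x + y) : ℂ) = fourier n x * fourier n y := by
  simp_rw [fourier_apply, smul_add, AddCircle.toCircle_add, Circle.coe_mul]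

lemma fourier_neg_arg (n : ℤ) (x : 𝕋) : (fourier n (-x) : ℂ) = fourier (-n) x := by
  rw [fourier_apply, fourier_apply, smul_neg, neg_smul]

lemma fourier_ne_zero (n : ℤ) (x : 𝕋) : (fourier n x : ℂ) ≠ 0 := by
  have h : ‖(fourier n x : ℂ)‖ = 1 := by rw [fourier_apply]; exact Circle.norm_coe _
  intro h0
  rw [h0] at h
  simp at h

lemma jw_fourierLp (n : ℤ) :
    Jop (Wop (fourierLp 2 n : L2)) =
      (fourier n (((Real.pi : ℝ) : 𝕋)) : ℂ) • (fourierLp 2 (-n - 1) : L2) := by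
  apply Lp.ext
  refine (jop_ae (Wop (fourierLp 2 n))).trans ?_
  have hR : ⇑((fourier n (((Real.pi : ℝ) : 𝕋)) : ℂ) • (fourierLp 2 (-n - 1) : L2)) =ᵐ[μ]
      fun x => (fourier n (((Real.pi : ℝ) : 𝕋)) : ℂ) * fourier (-n - 1) x := by
    filter_upwards [Lp.coeFn_smul ((fourier n (((Real.pi : ℝ) : 𝕋)) : ℂ))
      (fourierLp 2 (-n - 1) : L2), coeFn_fourierLp 2 (-n - 1)] with x a b
    rw [a, Pi.smul_apply, smul_eq_mul, b]
  refine EventuallyEq.trans ?_ hR.symm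
  filter_upwards [comp_neg_ae (wop_ae (fourierLp 2 n)),
    comp_flip_ae (coeFn_fourierLp 2 n)] with x a b
  have a' : (Wop (fourierLp 2 n : L2)) (-x)
      = (fourierLp 2 n : L2) (-x + ((Real.pi : ℝ) : 𝕋)) := a
  have b' : (fourierLp 2 n : L2) (-x + ((Real.pi : ℝ) : 𝕋))
      = fourier n (-x + ((Real.pi : ℝ) : 𝕋)) := b
  rw [a', b', fourier_add_arg, fourier_neg_arg, ← mul_assoc, ← fourier_add]
  rw [show (-1 + -n : ℤ) = -n - 1 by ring, mul_comm]

/-- `JW` as a continuous linear equivalence. -/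
def JWce : L2 ≃L[ℂ] L2 :=
  ContinuousLinearEquiv.equivOfInverse (Jop ∘L Wop) (Wop ∘L Jop)
    (fun x => by simp [jop_jop, wop_wop])
    (fun x => by simp [jop_jop, wop_wop])

lemma map_closure (e : L2 ≃L[ℂ] L2) (K : Submodule ℂ L2) :
    Submodule.map ((e : L2 →L[ℂ] L2) : L2 →ₗ[ℂ] L2) K.topologicalClosure = (Submodule.map ((e : L2 →L[ℂ] L2) : L2 →ₗ[ℂ] L2) K).topologicalClosure := by
  apply SetLike.ext'
  rw [Submodule.topologicalClosure_coe, Submodule.map_coe, Submodule.map_coe,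
    Submodule.topologicalClosure_coe]
  exact e.toHomeomorph.image_closure _

lemma map_JW_Nneg : Submodule.map ((JWce : L2 →L[ℂ] L2) : L2 →ₗ[ℂ] L2) Nneg = Hardy := by
  unfold Nneg Hardy
  rw [map_closure, Submodule.map_span]
  congr 1
  apply le_antisymm
  · rw [span_le]
    rintro _ ⟨_, ⟨n, rfl⟩, rfl⟩
    have h1 : JWce (fourierLp 2 (-(n : ℤ) - 1) : L2)
        = (fourier (-(n : ℤ) - 1) (((Real.pi : ℝ) : 𝕋)) : ℂ) • (fourierLp 2 (n : ℤ) : L2) := by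
      show Jop (Wop (fourierLp 2 (-(n : ℤ) - 1) : L2)) = _
      rw [jw_fourierLp, show (-(-(n : ℤ) - 1) - 1) = (n : ℤ) by ring]
    rw [SetLike.mem_coe]
    show JWce (fourierLp 2 (-(n : ℤ) - 1) : L2) ∈ _
    rw [h1]
    exact smul_mem _ _ (subset_span ⟨n, rfl⟩)
  · rw [span_le]
    rintro _ ⟨n, rfl⟩
    have h1 : JWce (fourierLp 2 (-(n : ℤ) - 1) : L2)
        = (fourier (-(n : ℤ) - 1) (((Real.pi : ℝ) : 𝕋)) : ℂ) • (fourierLp 2 (n : ℤ) : L2) := by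
      show Jop (Wop (fourierLp 2 (-(n : ℤ) - 1) : L2)) = _
      rw [jw_fourierLp, show (-(-(n : ℤ) - 1) - 1) = (n : ℤ) by ring]
    have h2 : (fourierLp 2 (n : ℤ) : L2)
        = ((fourier (-(n : ℤ) - 1) (((Real.pi : ℝ) : 𝕋)) : ℂ))⁻¹ •
          JWce (fourierLp 2 (-(n : ℤ) - 1) : L2) := by
      rw [h1, smul_smul, inv_mul_cancel₀ (fourier_ne_zero _ _), one_smul]
    show (fourierLp 2 (n : ℤ) : L2) ∈ _
    rw [SetLike.mem_coe, h2]
    exact smul_mem _ _ (subset_span ⟨_, ⟨n, rfl⟩, rfl⟩)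

end Lemmas7
section Final
open Filter Submodule

lemma cond_transfer {T : L2 →L[ℂ] L2} (hT : Function.Bijective T) (X Y : Submodule ℂ L2) :
    (X ⊓ Y = ⊥ ∧ X ⊔ Y = ⊤) ↔
      (X.map (T : L2 →ₗ[ℂ] L2) ⊓ Y.map (T : L2 →ₗ[ℂ] L2) = ⊥ ∧ X.map (T : L2 →ₗ[ℂ] L2) ⊔ Y.map (T : L2 →ₗ[ℂ] L2) = ⊤) := by
  let o := Submodule.orderIsoMapComapOfBijective (T : L2 →ₗ[ℂ] L2) hT
  have ho : ∀ K : Submodule ℂ L2, K.map (T : L2 →ₗ[ℂ] L2) = o K := fun _ => rfl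
  rw [ho X, ho Y, ← o.map_inf, ← o.map_sup]
  constructor
  · rintro ⟨h1, h2⟩
    rw [h1, h2, o.map_bot, o.map_top]
    exact ⟨rfl, rfl⟩
  · rintro ⟨h1, h2⟩
    exact ⟨o.injective (by rw [o.map_bot]; exact h1),
      o.injective (by rw [o.map_top]; exact h2)⟩

variable {φ : 𝕋 → ℂ}

lemma lmulφ_bij (hφ : MemLp φ ⊤ μ) (hφi : MemLp (fun x => (φ x)⁻¹) ⊤ μ)
    (hφ0 : ∀ᵐ x ∂μ, φ x ≠ 0) : Function.Bijective (Lmul φ) :=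
  Function.bijective_iff_has_inverse.mpr ⟨Lmul (fun x => (φ x)⁻¹),
    lmul_inv_cancel' hφ hφi hφ0, lmul_inv_cancel hφ hφi hφ0⟩

lemma ae_flip {p : 𝕋 → Prop} (h : ∀ᵐ x ∂μ, p x) :
    ∀ᵐ x ∂μ, p (((Real.pi : ℝ) : 𝕋) - x) := by
  rw [MeasureTheory.ae_iff] at h ⊢
  have he : {x : 𝕋 | ¬ p (((Real.pi : ℝ) : 𝕋) - x)}
      = (fun x : 𝕋 => -x + ((Real.pi : ℝ) : 𝕋)) ⁻¹' {y | ¬ p y} := by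
    ext x
    simp [sub_eq_neg_add]
  rw [he]
  exact mp_flip.quasiMeasurePreserving.preimage_null h

section U

lemma hU (hφ : MemLp φ ⊤ μ) (hφi : MemLp (fun x => (φ x)⁻¹) ⊤ μ)
    (hφ0 : ∀ᵐ x ∂μ, φ x ≠ 0) : Function.Bijective
    ⇑(Jop ∘L Wop ∘L Lmul (fun x => (φ x)⁻¹) : L2 →L[ℂ] L2) := by
  have h1 : Function.Bijective (Lmul (fun x => (φ x)⁻¹)) :=
    Function.bijective_iff_has_inverse.mpr ⟨Lmul φ,
      lmul_inv_cancel hφ hφi hφ0, lmul_inv_cancel' hφ hφi hφ0⟩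
  exact jop_bij.comp (wop_bij.comp h1)

lemma key1 (hφ : MemLp φ ⊤ μ) (hφi : MemLp (fun x => (φ x)⁻¹) ⊤ μ)
    (hφ0 : ∀ᵐ x ∂μ, φ x ≠ 0) (f : L2) :
    (Jop ∘L Wop ∘L Lmul (fun x => (φ x)⁻¹)) (Lmul φ f) = Jop (Wop f) := by
  show Jop (Wop (Lmul (fun x => (φ x)⁻¹) (Lmul φ f))) = Jop (Wop f)
  rw [lmul_inv_cancel' hφ hφi hφ0]

lemma key2 (hφi : MemLp (fun x => (φ x)⁻¹) ⊤ μ) (f : L2) :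
    (Jop ∘L Wop ∘L Lmul (fun x => (φ x)⁻¹)) f =
      Lmul (fun x => (φ (((Real.pi : ℝ) : 𝕋) - x))⁻¹) (Jop (Wop f)) := by
  show Jop (Wop (Lmul (fun x => (φ x)⁻¹) f)) = _
  exact jw_lmul hφi f

lemma mapU1 (hφ : MemLp φ ⊤ μ) (hφi : MemLp (fun x => (φ x)⁻¹) ⊤ μ)
    (hφ0 : ∀ᵐ x ∂μ, φ x ≠ 0) :
    Submodule.map ((Jop ∘L Wop ∘L Lmul (fun x => (φ x)⁻¹)) : L2 →ₗ[ℂ] L2)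
      (Submodule.map (Lmul φ : L2 →ₗ[ℂ] L2) L2J) = LinearMap.ker (PJ : L2 →ₗ[ℂ] L2) := by
  ext y
  constructor
  · intro hy
    obtain ⟨z, hz, rfl⟩ := Submodule.mem_map.mp hy
    obtain ⟨x, hx, rfl⟩ := Submodule.mem_map.mp hz
    have hx' : Jop x = x := mem_L2J_iff.mp hx
    refine mem_ker_pj_iff.mpr ?_
    simp only [ContinuousLinearMap.coe_coe]
    rw [key1 hφ hφi hφ0, jop_jop]
    have hwj := wop_jop x
    rw [hx'] at hwj
    exact hwj
  · intro hy
    have hy' : Jop y = -y := mem_ker_pj_iff.mp hy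
    refine Submodule.mem_map.mpr ⟨Lmul φ (-(Wop y)),
      Submodule.mem_map.mpr ⟨-(Wop y), ?_, rfl⟩, ?_⟩
    · apply mem_L2J_iff.mpr
      rw [map_neg, ← wop_jop y, hy', map_neg]
    · rw [ContinuousLinearMap.coe_coe, key1 hφ hφi hφ0, map_neg, wop_wop, map_neg, hy', neg_neg]

lemma mapU2 (hφi : MemLp (fun x => (φ x)⁻¹) ⊤ μ) :
    Submodule.map ((Jop ∘L Wop ∘L Lmul (fun x => (φ x)⁻¹)) : L2 →ₗ[ℂ] L2) Hardyᗮ =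
      Submodule.map ((Lmul (fun x => (φ (((Real.pi : ℝ) : 𝕋) - x))⁻¹)) : L2 →ₗ[ℂ] L2) Hardy := by
  conv_rhs => rw [← map_JW_Nneg]
  rw [hardy_orth]
  ext y
  constructor
  · intro hy
    obtain ⟨x, hx, rfl⟩ := Submodule.mem_map.mp hy
    refine Submodule.mem_map.mpr ⟨JWce x, Submodule.mem_map.mpr ⟨x, hx, rfl⟩, ?_⟩
    exact (key2 hφi x).symm
  · intro hy
    obtain ⟨z, hz, rfl⟩ := Submodule.mem_map.mp hy
    obtain ⟨x, hx, rfl⟩ := Submodule.mem_map.mp hz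
    exact Submodule.mem_map.mpr ⟨x, hx, key2 hφi x⟩

end U
end Final
set_option maxHeartbeats 1000000 in
/-- For invertible `φ ∈ L^∞` and `ψ(t) = φ⁻¹(-t⁻¹)`, `Φ(φ)` is invertible iff `Ψ(ψ)` is. -/
theorem stmt_12 (φ : 𝕋 → ℂ) (hφ : MemLp φ ⊤ μ)
    (hφi : MemLp (fun x => (φ x)⁻¹) ⊤ μ) (hφ0 : ∀ᵐ x ∂μ, φ x ≠ 0) :
    Function.Bijective (Phi φ) ↔
      Function.Bijective (Psi fun x => (φ ((Real.pi : ℝ) - x))⁻¹) := by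
  have hψ : MemLp (fun x : 𝕋 => (φ (((Real.pi : ℝ) : 𝕋) - x))⁻¹) ⊤ μ :=
    memℒp_flip (g := fun x => (φ x)⁻¹) hφi
  have hψi : MemLp (fun x : 𝕋 => ((φ (((Real.pi : ℝ) : 𝕋) - x))⁻¹)⁻¹) ⊤ μ := by
    have he : (fun x : 𝕋 => ((φ (((Real.pi : ℝ) : 𝕋) - x))⁻¹)⁻¹)
        = fun x : 𝕋 => φ (((Real.pi : ℝ) : 𝕋) - x) := funext fun x => inv_inv _
    rw [he]
    exact memℒp_flip (g := φ) hφ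
  have hψ0 : ∀ᵐ x ∂μ, (φ (((Real.pi : ℝ) : 𝕋) - x))⁻¹ ≠ 0 :=
    (ae_flip hφ0).mono fun x hx => inv_ne_zero hx
  rw [phi_bij_iff (lmulφ_bij hφ hφi hφ0).injective,
    psi_bij_iff (lmulφ_bij hψ hψi hψ0).injective,
    cond_transfer (hU hφ hφi hφ0) (Submodule.map (Lmul φ : L2 →ₗ[ℂ] L2) L2J) Hardyᗮ,
    mapU1 hφ hφi hφ0, mapU2 hφi]
  constructor <;> rintro ⟨h1, h2⟩ <;> exact ⟨by rwa [inf_comm], by rwa [sup_comm]⟩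

end TH
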